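/- Let V : ℝ → ℝ be continuous, and let ω, Ω ∈ ℝ with ω ≠ 0. Let φ́, φ̀ : ℝ → ℂ be twice continuously differentiable solutions of φ'' = Vφ with the asymptotics: lim_{u → −∞} (φ́(u) − e^{iΩu}) = 0 and lim_{u → −∞} (φ́'(u) − iΩ e^{iΩu}) = 0; lim_{u → +∞} (φ̀(u) − e^{−iωu}) = 0 and lim_{u → +∞} (φ̀'(u) + iω e^{−iωu}) = 0. Suppose A, B ∈ ℂ are such that \overline{φ́} = A φ̀ + B \overline{φ̀} on ℝ. Then the reflection and transmission coefficients satisfy |A|² − |B|² = Ω/ω. -/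

import Mathlib

open Filter

private lemma tendsto_mul_bdd {l : Filter ℝ} {g b : ℝ → ℂ} {C : ℝ}
    (hg : ∀ u, ‖g u‖ ≤ C) (hb : Tendsto b l (nhds 0)) :
    Tendsto (fun u => g u * b u) l (nhds 0) := by
  have h0 : Tendsto (fun u => C * ‖b u‖) l (nhds 0) := by
    simpa using hb.norm.const_mul C
  refine squeeze_zero_norm (fun u => ?_) h0
  rw [norm_mul]
  exact mul_le_mul_of_nonneg_right (hg u) (norm_nonneg _)

private lemma wronskian_tendsto {l : Filter ℝ} {p q P Q : ℝ → ℂ} {C : ℝ} {c : ℂ}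
    (hp : Tendsto (fun u => p u - P u) l (nhds 0))
    (hq : Tendsto (fun u => q u - Q u) l (nhds 0))
    (hP : ∀ u, ‖P u‖ ≤ C) (hQ : ∀ u, ‖Q u‖ ≤ C)
    (hc : ∀ u, (starRingEnd ℂ) (P u) * Q u - (starRingEnd ℂ) (Q u) * P u = c) :
    Tendsto (fun u => (starRingEnd ℂ) (p u) * q u - (starRingEnd ℂ) (q u) * p u) l (nhds c) := by
  have hp' : Tendsto (fun u => (starRingEnd ℂ) (p u - P u)) l (nhds 0) := by
    simpa only [starRingEnd_apply, star_zero] using hp.star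
  have hq' : Tendsto (fun u => (starRingEnd ℂ) (q u - Q u)) l (nhds 0) := by
    simpa only [starRingEnd_apply, star_zero] using hq.star
  have t1 : Tendsto (fun u => (starRingEnd ℂ) (P u) * (q u - Q u)) l (nhds 0) :=
    tendsto_mul_bdd (fun u => by simpa using hP u) hq
  have t2 : Tendsto (fun u => Q u * (starRingEnd ℂ) (p u - P u)) l (nhds 0) :=
    tendsto_mul_bdd hQ hp'
  have t3 : Tendsto (fun u => (starRingEnd ℂ) (p u - P u) * (q u - Q u)) l (nhds 0) := by
    simpa using hp'.mul hq
  have t4 : Tendsto (fun u => (starRingEnd ℂ) (Q u) * (p u - P u)) l (nhds 0) :=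
    tendsto_mul_bdd (fun u => by simpa using hQ u) hp
  have t5 : Tendsto (fun u => P u * (starRingEnd ℂ) (q u - Q u)) l (nhds 0) :=
    tendsto_mul_bdd hP hq'
  have t6 : Tendsto (fun u => (starRingEnd ℂ) (q u - Q u) * (p u - P u)) l (nhds 0) := by
    simpa using hq'.mul hp
  have H : Tendsto (fun u =>
      (((((starRingEnd ℂ) (P u) * (q u - Q u) + Q u * (starRingEnd ℂ) (p u - P u))
        + (starRingEnd ℂ) (p u - P u) * (q u - Q u))
        - (starRingEnd ℂ) (Q u) * (p u - P u))
        - P u * (starRingEnd ℂ) (q u - Q u))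
        - (starRingEnd ℂ) (q u - Q u) * (p u - P u)) l (nhds 0) := by
    simpa using ((((t1.add t2).add t3).sub t4).sub t5).sub t6
  have key : ∀ u, (starRingEnd ℂ) (p u) * q u - (starRingEnd ℂ) (q u) * p u
      = c + ((((((starRingEnd ℂ) (P u) * (q u - Q u) + Q u * (starRingEnd ℂ) (p u - P u))
        + (starRingEnd ℂ) (p u - P u) * (q u - Q u))
        - (starRingEnd ℂ) (Q u) * (p u - P u))
        - P u * (starRingEnd ℂ) (q u - Q u))
        - (starRingEnd ℂ) (q u - Q u) * (p u - P u)) := by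
    intro u
    rw [← hc u]
    simp only [map_sub]
    ring
  have h' := (tendsto_const_nhds (x := c) (f := l)).add H
  rw [add_zero] at h'
  exact h'.congr fun u => (key u).symm

/-- **The superradiance flux relation `|A|² − |B|² = Ω/ω`.**
Let `V : ℝ → ℝ` be continuous, `ω ≠ 0` and `Ω` real. Let `φ́, φ̀ : ℝ → ℂ` be `C²`
solutions of `φ'' = V φ` with Jost asymptotics `φ́(u) ∼ e^{iΩu}` (with derivative
`iΩ e^{iΩu}`) as `u → −∞` and `φ̀(u) ∼ e^{−iωu}` (with derivative `−iω e^{−iωu}`)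
as `u → +∞`. If `A, B ∈ ℂ` are such that `conj φ́ = A φ̀ + B (conj φ̀)` on `ℝ`,
then the reflection and transmission coefficients satisfy `|A|² − |B|² = Ω/ω`. -/
theorem superradiance_flux_relation (V : ℝ → ℝ) (hV : Continuous V)
    (ω Ω : ℝ) (hω : ω ≠ 0) (φin φout : ℝ → ℂ)
    (hin : ContDiff ℝ 2 φin) (hout : ContDiff ℝ 2 φout)
    (heqin : ∀ u : ℝ, deriv (deriv φin) u = (V u : ℂ) * φin u)
    (heqout : ∀ u : ℝ, deriv (deriv φout) u = (V u : ℂ) * φout u)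
    (h₁ : Tendsto (fun u : ℝ => φin u - Complex.exp (Complex.I * Ω * u))
      atBot (nhds 0))
    (h₂ : Tendsto
      (fun u : ℝ => deriv φin u - Complex.I * Ω * Complex.exp (Complex.I * Ω * u))
      atBot (nhds 0))
    (h₃ : Tendsto (fun u : ℝ => φout u - Complex.exp (-(Complex.I * ω * u)))
      atTop (nhds 0))
    (h₄ : Tendsto
      (fun u : ℝ => deriv φout u + Complex.I * ω * Complex.exp (-(Complex.I * ω * u)))
      atTop (nhds 0))
    (A B : ℂ)
    (hAB : ∀ u : ℝ, (starRingEnd ℂ) (φin u) = A * φout u + B * (starRingEnd ℂ) (φout u)) :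
    ‖A‖ ^ 2 - ‖B‖ ^ 2 = Ω / ω := by
  -- derivative facts
  have hdin : ∀ u, HasDerivAt φin (deriv φin u) u := fun u =>
    ((hin.differentiable (by norm_num)) u).hasDerivAt
  have hdout : ∀ u, HasDerivAt φout (deriv φout u) u := fun u =>
    ((hout.differentiable (by norm_num)) u).hasDerivAt
  have hin2 : ContDiff ℝ ((1 : ℕ∞) + 1) φin := by exact_mod_cast hin
  have hdin2 : ∀ u, HasDerivAt (deriv φin) (deriv (deriv φin) u) u := fun u =>
    ((((contDiff_succ_iff_deriv.mp hin2).2.2).differentiable (by norm_num)) u).hasDerivAt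
  -- the Wronskian
  set W : ℝ → ℂ := fun u =>
    φin u * (starRingEnd ℂ) (deriv φin u) - deriv φin u * (starRingEnd ℂ) (φin u) with hW
  have hWd : ∀ u, HasDerivAt W 0 u := by
    intro u
    have hc1 : HasDerivAt (fun v => (starRingEnd ℂ) (deriv φin v))
        ((starRingEnd ℂ) (deriv (deriv φin) u)) u := by
      simpa only [starRingEnd_apply] using (hdin2 u).star
    have hc0 : HasDerivAt (fun v => (starRingEnd ℂ) (φin v))
        ((starRingEnd ℂ) (deriv φin u)) u := by
      simpa only [starRingEnd_apply] using (hdin u).star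
    have hmul1 := (hdin u).mul hc1
    have hmul2 := (hdin2 u).mul hc0
    have hz : (deriv φin u * (starRingEnd ℂ) (deriv φin u)
        + φin u * (starRingEnd ℂ) (deriv (deriv φin) u))
        - (deriv (deriv φin) u * (starRingEnd ℂ) (φin u)
        + deriv φin u * (starRingEnd ℂ) (deriv φin u)) = 0 := by
      rw [heqin u]
      simp only [map_mul, Complex.conj_ofReal]
      ring
    have h' := hmul1.sub hmul2
    rw [hz] at h'
    exact h'
  have hWconst : ∀ u, W u = W 0 := fun u =>
    is_const_of_deriv_eq_zero (fun v => (hWd v).differentiableAt)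
      (fun v => (hWd v).deriv) u 0
  -- limit at -∞
  have hbot : Tendsto W atBot (nhds (-(2 * Complex.I * Ω))) := by
    have main := wronskian_tendsto (l := atBot)
      (p := fun u => (starRingEnd ℂ) (φin u))
      (q := fun u => (starRingEnd ℂ) (deriv φin u))
      (P := fun u : ℝ => (starRingEnd ℂ) (Complex.exp (Complex.I * Ω * u)))
      (Q := fun u : ℝ => (starRingEnd ℂ) (Complex.I * Ω * Complex.exp (Complex.I * Ω * u)))
      (C := 1 + |Ω|) (c := -(2 * Complex.I * Ω))
      (by simpa only [starRingEnd_apply, star_sub, star_zero] using h₁.star)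
      (by simpa only [starRingEnd_apply, star_sub, star_zero] using h₂.star)
      (fun u => by
        have h1 : ‖(starRingEnd ℂ) (Complex.exp (Complex.I * Ω * u))‖ = 1 := by
          rw [starRingEnd_apply, norm_star]
          simp [Complex.norm_exp]
        rw [h1]
        linarith [abs_nonneg Ω])
      (fun u => by
        have h1 : ‖(starRingEnd ℂ) (Complex.I * Ω * Complex.exp (Complex.I * Ω * u))‖ = |Ω| := by
          rw [starRingEnd_apply, norm_star]
          simp [map_mul, Complex.norm_exp, Complex.norm_I, Complex.norm_real]
        rw [h1]
        linarith [abs_nonneg Ω])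
      (fun u => by
        have hxy : Complex.exp (Complex.I * Ω * u)
            * (starRingEnd ℂ) (Complex.exp (Complex.I * Ω * u)) = 1 := by
          rw [← Complex.exp_conj, ← Complex.exp_add]
          simp [map_mul, Complex.conj_I, Complex.conj_ofReal]
        simp only [Complex.conj_conj, map_mul, map_neg, Complex.conj_I, Complex.conj_ofReal,
          neg_neg]
        linear_combination (-(2 * Complex.I * (Ω:ℂ))) * hxy)
    refine main.congr fun u => by simp [W, Complex.conj_conj]
  -- identity for conj (deriv φin)
  have hqid : ∀ u, (starRingEnd ℂ) (deriv φin u)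
      = A * deriv φout u + B * (starRingEnd ℂ) (deriv φout u) := by
    intro u
    have h1 : HasDerivAt (fun v => (starRingEnd ℂ) (φin v))
        ((starRingEnd ℂ) (deriv φin u)) u := by
      simpa only [starRingEnd_apply] using (hdin u).star
    have h2 : HasDerivAt (fun v => A * φout v + B * (starRingEnd ℂ) (φout v))
        (A * deriv φout u + B * (starRingEnd ℂ) (deriv φout u)) u := by
      refine HasDerivAt.add ((hdout u).const_mul A) ?_
      have h3 : HasDerivAt (fun v => (starRingEnd ℂ) (φout v))
          ((starRingEnd ℂ) (deriv φout u)) u := by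
        simpa only [starRingEnd_apply] using (hdout u).star
      exact h3.const_mul B
    have hfun : (fun v => (starRingEnd ℂ) (φin v))
        = fun v => A * φout v + B * (starRingEnd ℂ) (φout v) := funext hAB
    rw [hfun] at h1
    exact h1.unique h2
  -- limit at +∞
  have htop : Tendsto W atTop
      (nhds (2 * Complex.I * ω * ((starRingEnd ℂ) B * B - (starRingEnd ℂ) A * A))) := by
    have hstar3 : Tendsto (fun u : ℝ =>
        (starRingEnd ℂ) (φout u - Complex.exp (-(Complex.I * ω * u)))) atTop (nhds 0) := by
      simpa only [starRingEnd_apply, star_zero] using h₃.star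
    have hstar4 : Tendsto (fun u : ℝ =>
        (starRingEnd ℂ) (deriv φout u + Complex.I * ω * Complex.exp (-(Complex.I * ω * u))))
        atTop (nhds 0) := by
      simpa only [starRingEnd_apply, star_zero] using h₄.star
    have main := wronskian_tendsto (l := atTop)
      (p := fun u => (starRingEnd ℂ) (φin u))
      (q := fun u => (starRingEnd ℂ) (deriv φin u))
      (P := fun u : ℝ => A * Complex.exp (-(Complex.I * ω * u))
        + B * (starRingEnd ℂ) (Complex.exp (-(Complex.I * ω * u))))
      (Q := fun u : ℝ => A * (-(Complex.I * ω * Complex.exp (-(Complex.I * ω * u))))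
        + B * (starRingEnd ℂ) (-(Complex.I * ω * Complex.exp (-(Complex.I * ω * u)))))
      (C := (1 + |ω|) * (‖A‖ + ‖B‖))
      (c := 2 * Complex.I * ω * ((starRingEnd ℂ) B * B - (starRingEnd ℂ) A * A))
      ?_ ?_ ?_ ?_ ?_
    · refine main.congr fun u => by simp [W, Complex.conj_conj]
    · -- hp
      have H := (h₃.const_mul A).add (hstar3.const_mul B)
      rw [mul_zero, mul_zero, add_zero] at H
      refine H.congr fun u => ?_
      show A * (φout u - Complex.exp (-(Complex.I * ω * u)))
          + B * (starRingEnd ℂ) (φout u - Complex.exp (-(Complex.I * ω * u)))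
          = (starRingEnd ℂ) (φin u) - (A * Complex.exp (-(Complex.I * ω * u))
            + B * (starRingEnd ℂ) (Complex.exp (-(Complex.I * ω * u))))
      rw [hAB u]
      simp only [map_sub]
      ring
    · -- hq
      have H := (h₄.const_mul A).add (hstar4.const_mul B)
      rw [mul_zero, mul_zero, add_zero] at H
      refine H.congr fun u => ?_
      show A * (deriv φout u + Complex.I * ω * Complex.exp (-(Complex.I * ω * u)))
          + B * (starRingEnd ℂ) (deriv φout u + Complex.I * ω * Complex.exp (-(Complex.I * ω * u)))
          = (starRingEnd ℂ) (deriv φin u)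
            - (A * (-(Complex.I * ω * Complex.exp (-(Complex.I * ω * u))))
            + B * (starRingEnd ℂ) (-(Complex.I * ω * Complex.exp (-(Complex.I * ω * u)))))
      rw [hqid u]
      simp only [map_add, map_mul, map_neg, Complex.conj_I, Complex.conj_ofReal]
      ring
    · -- hP
      intro u
      have he : ‖Complex.exp (-(Complex.I * ω * u))‖ = 1 := by
        simp [Complex.norm_exp]
      calc ‖A * Complex.exp (-(Complex.I * ω * u))
          + B * (starRingEnd ℂ) (Complex.exp (-(Complex.I * ω * u)))‖
          ≤ ‖A * Complex.exp (-(Complex.I * ω * u))‖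
            + ‖B * (starRingEnd ℂ) (Complex.exp (-(Complex.I * ω * u)))‖ := norm_add_le _ _
        _ = ‖A‖ + ‖B‖ := by
            rw [norm_mul, norm_mul, starRingEnd_apply, norm_star, he, mul_one, mul_one]
        _ ≤ (1 + |ω|) * (‖A‖ + ‖B‖) := by
            nlinarith [abs_nonneg ω, norm_nonneg A, norm_nonneg B]
    · -- hQ
      intro u
      have he : ‖Complex.exp (-(Complex.I * ω * u))‖ = 1 := by
        simp [Complex.norm_exp]
      have h1 : ‖(-(Complex.I * ω * Complex.exp (-(Complex.I * ω * u))))‖ = |ω| := by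
        rw [norm_neg]
        simp only [norm_mul, Complex.norm_I, Complex.norm_real, Real.norm_eq_abs, one_mul]
        rw [he, mul_one]
      calc ‖A * (-(Complex.I * ω * Complex.exp (-(Complex.I * ω * u))))
          + B * (starRingEnd ℂ) (-(Complex.I * ω * Complex.exp (-(Complex.I * ω * u))))‖
          ≤ ‖A‖ * |ω| + ‖B‖ * |ω| := by
            refine le_trans (norm_add_le _ _) ?_
            simp only [norm_mul, starRingEnd_apply, norm_star, h1]
            exact le_refl _
        _ ≤ (1 + |ω|) * (‖A‖ + ‖B‖) := by
            nlinarith [abs_nonneg ω, norm_nonneg A, norm_nonneg B]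
    · -- hc
      intro u
      have hxy : Complex.exp (-(Complex.I * ω * u))
          * (starRingEnd ℂ) (Complex.exp (-(Complex.I * ω * u))) = 1 := by
        rw [← Complex.exp_conj, ← Complex.exp_add]
        simp [map_mul, Complex.conj_I, Complex.conj_ofReal]
      simp only [map_add, map_mul, map_neg, Complex.conj_conj, Complex.conj_I,
        Complex.conj_ofReal]
      linear_combination (2 * Complex.I * (ω:ℂ)
        * ((starRingEnd ℂ) B * B - (starRingEnd ℂ) A * A)) * hxy
  -- combine
  have hWb : Tendsto W atBot (nhds (W 0)) := by
    rw [show W = fun _ => W 0 from funext hWconst]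
    exact tendsto_const_nhds
  have hWt : Tendsto W atTop (nhds (W 0)) := by
    rw [show W = fun _ => W 0 from funext hWconst]
    exact tendsto_const_nhds
  have e1 : W 0 = -(2 * Complex.I * Ω) := tendsto_nhds_unique hWb hbot
  have e2 : W 0 = 2 * Complex.I * ω * ((starRingEnd ℂ) B * B - (starRingEnd ℂ) A * A) :=
    tendsto_nhds_unique hWt htop
  have heq : -(2 * Complex.I * (Ω:ℂ))
      = 2 * Complex.I * ω * ((starRingEnd ℂ) B * B - (starRingEnd ℂ) A * A) := e1 ▸ e2
  rw [Complex.conj_mul', Complex.conj_mul'] at heq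
  have h2I : (2 * Complex.I : ℂ) ≠ 0 := by
    simp [Complex.I_ne_zero]
  have hc : (Ω : ℂ) = (ω : ℂ) * ((‖A‖:ℂ) ^ 2 - (‖B‖:ℂ) ^ 2) := by
    apply mul_left_cancel₀ h2I
    linear_combination -heq
  have hr : Ω = ω * (‖A‖ ^ 2 - ‖B‖ ^ 2) := by exact_mod_cast hc
  rw [eq_div_iff hω]
  linear_combination -hr
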